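/- If there exists a test deciding between two probability distributions with both error probabilities at most ε < 1/2, then their Hellinger affinity is at most 2√(ε(1-ε)). Precisely: let P, Q be probability measures on Ω with densities p, q with respect to Π, and let A ⊆ Ω be measurable with P(Ω∖A) ≤ ε and Q(A) ≤ ε; then ∫_Ω √(pq) dΠ ≤ 2√(ε(1-ε)). -/

import Mathlib

open MeasureTheory

private lemma key_ineq {a b ε : ℝ} (ha : 0 ≤ a) (hb : 0 ≤ b) (haε : a ≤ ε) (hbε : b ≤ ε)
    (hε0 : 0 ≤ ε) (hε : ε < 1/2) :
    Real.sqrt (1-b) * Real.sqrt a + Real.sqrt b * Real.sqrt (1-a) ≤ 2 * Real.sqrt (ε * (1-ε)) := by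
  have h1 : a ≤ 1/2 := haε.trans hε.le
  have h2 : b ≤ 1/2 := hbε.trans hε.le
  set x := Real.sqrt a
  set y := Real.sqrt b
  set u := Real.sqrt (1-a)
  set v := Real.sqrt (1-b)
  set s := Real.sqrt ε
  set t := Real.sqrt (1-ε)
  have hx : 0 ≤ x := Real.sqrt_nonneg _
  have hy : 0 ≤ y := Real.sqrt_nonneg _
  have hu : 0 ≤ u := Real.sqrt_nonneg _
  have hv : 0 ≤ v := Real.sqrt_nonneg _
  have hs : 0 ≤ s := Real.sqrt_nonneg _
  have ht : 0 ≤ t := Real.sqrt_nonneg _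
  have hx2 : x^2 = a := Real.sq_sqrt ha
  have hy2 : y^2 = b := Real.sq_sqrt hb
  have hu2 : u^2 = 1-a := Real.sq_sqrt (by linarith)
  have hv2 : v^2 = 1-b := Real.sq_sqrt (by linarith)
  have hs2 : s^2 = ε := Real.sq_sqrt hε0
  have ht2 : t^2 = 1-ε := Real.sq_sqrt (by linarith)
  have hxs : x ≤ s := Real.sqrt_le_sqrt haε
  have hys : y ≤ s := Real.sqrt_le_sqrt hbε
  have hst : s ≤ t := Real.sqrt_le_sqrt (by linarith)
  have htu : t ≤ u := Real.sqrt_le_sqrt (by linarith)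
  have htv : t ≤ v := Real.sqrt_le_sqrt (by linarith)
  have hsqrt : Real.sqrt (ε * (1-ε)) = s * t := Real.sqrt_mul hε0 _ ▸ rfl
  rw [hsqrt]
  nlinarith [sq_nonneg (x*t - s*u), sq_nonneg (y*t - s*v), sq_nonneg (x - s), sq_nonneg (y - s),
    mul_nonneg hs ht, mul_nonneg hx hv, mul_nonneg hy hu, sq_nonneg (u - t), sq_nonneg (v - t),
    mul_nonneg (mul_nonneg hs hs) ht, sq_nonneg (x*v - y*u), sq_nonneg (x*v + y*u - 2*s*t)]

private lemma cs_lemma {Ω : Type*} [MeasurableSpace Ω] (Pi : Measure Ω)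
    (p q : Ω → ℝ) (hp : Measurable p) (hq : Measurable q)
    (hp0 : ∀ ω, 0 ≤ p ω) (hq0 : ∀ ω, 0 ≤ q ω) (S : Set Ω) :
    ∫⁻ ω in S, ENNReal.ofReal (Real.sqrt (p ω * q ω)) ∂Pi ≤
      (∫⁻ ω in S, ENNReal.ofReal (p ω) ∂Pi) ^ (1/2 : ℝ) *
      (∫⁻ ω in S, ENNReal.ofReal (q ω) ∂Pi) ^ (1/2 : ℝ) := by
  have hpq : (2:ℝ).HolderConjugate 2 := Real.HolderConjugate.two_two
  have hf : AEMeasurable (fun ω => ENNReal.ofReal (Real.sqrt (p ω))) (Pi.restrict S) :=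
    (ENNReal.measurable_ofReal.comp (hp.sqrt)).aemeasurable
  have hg : AEMeasurable (fun ω => ENNReal.ofReal (Real.sqrt (q ω))) (Pi.restrict S) :=
    (ENNReal.measurable_ofReal.comp (hq.sqrt)).aemeasurable
  have := ENNReal.lintegral_mul_le_Lp_mul_Lq (Pi.restrict S) hpq hf hg
  have heq1 : ∀ ω, ENNReal.ofReal (Real.sqrt (p ω)) * ENNReal.ofReal (Real.sqrt (q ω)) =
      ENNReal.ofReal (Real.sqrt (p ω * q ω)) := by
    intro ω
    rw [← ENNReal.ofReal_mul (Real.sqrt_nonneg _), Real.sqrt_mul (hp0 ω)]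
  have heq2 : ∀ ω, (ENNReal.ofReal (Real.sqrt (p ω))) ^ (2:ℝ) = ENNReal.ofReal (p ω) := by
    intro ω
    rw [ENNReal.ofReal_rpow_of_nonneg (Real.sqrt_nonneg _) (by norm_num : (0:ℝ) ≤ 2),
      Real.rpow_two, Real.sq_sqrt (hp0 ω)]
  have heq3 : ∀ ω, (ENNReal.ofReal (Real.sqrt (q ω))) ^ (2:ℝ) = ENNReal.ofReal (q ω) := by
    intro ω
    rw [ENNReal.ofReal_rpow_of_nonneg (Real.sqrt_nonneg _) (by norm_num : (0:ℝ) ≤ 2),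
      Real.rpow_two, Real.sq_sqrt (hq0 ω)]
  simp only [_root_.Pi.mul_apply, heq1, heq2, heq3] at this
  exact this

/-- If a test decides between `P` and `Q` with both errors at most `ε < 1/2`, then the
Hellinger affinity `∫ √(pq) dΠ` is at most `2√(ε(1-ε))`. -/
theorem hellinger_affinity_le_of_test (Ω : Type*) [MeasurableSpace Ω] (Pi : Measure Ω)
    [SigmaFinite Pi] (p q : Ω → ℝ) (hp : Measurable p) (hq : Measurable q)
    (hp0 : ∀ ω, 0 ≤ p ω) (hq0 : ∀ ω, 0 ≤ q ω)
    (P Q : Measure Ω) [IsProbabilityMeasure P] [IsProbabilityMeasure Q]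
    (hP : P = Pi.withDensity (fun ω => ENNReal.ofReal (p ω)))
    (hQ : Q = Pi.withDensity (fun ω => ENNReal.ofReal (q ω)))
    (ε : ℝ) (hε0 : 0 ≤ ε) (hε : ε < 1 / 2)
    (A : Set Ω) (hA : MeasurableSet A)
    (herr1 : P Aᶜ ≤ ENNReal.ofReal ε) (herr2 : Q A ≤ ENNReal.ofReal ε) :
    ∫ ω, Real.sqrt (p ω * q ω) ∂Pi ≤ 2 * Real.sqrt (ε * (1 - ε)) := by
  -- measures of sets as lintegrals
  have hPA : P A = ∫⁻ ω in A, ENNReal.ofReal (p ω) ∂Pi := by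
    rw [hP, withDensity_apply _ hA]
  have hPAc : P Aᶜ = ∫⁻ ω in Aᶜ, ENNReal.ofReal (p ω) ∂Pi := by
    rw [hP, withDensity_apply _ hA.compl]
  have hQA : Q A = ∫⁻ ω in A, ENNReal.ofReal (q ω) ∂Pi := by
    rw [hQ, withDensity_apply _ hA]
  have hQAc : Q Aᶜ = ∫⁻ ω in Aᶜ, ENNReal.ofReal (q ω) ∂Pi := by
    rw [hQ, withDensity_apply _ hA.compl]
  have hPA1 : P A ≤ 1 := prob_le_one
  have hPAc1 : P Aᶜ ≤ 1 := prob_le_one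
  have hQA1 : Q A ≤ 1 := prob_le_one
  have hQAc1 : Q Aᶜ ≤ 1 := prob_le_one
  -- the main lintegral bound
  set L := ∫⁻ ω, ENNReal.ofReal (Real.sqrt (p ω * q ω)) ∂Pi with hL
  set R := (P A) ^ (1/2 : ℝ) * (Q A) ^ (1/2 : ℝ) + (P Aᶜ) ^ (1/2 : ℝ) * (Q Aᶜ) ^ (1/2 : ℝ)
    with hR
  have hLR : L ≤ R := by
    rw [hL, ← lintegral_add_compl _ hA, hR, hPA, hPAc, hQA, hQAc]
    exact add_le_add (cs_lemma Pi p q hp hq hp0 hq0 A) (cs_lemma Pi p q hp hq hp0 hq0 Aᶜ)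
  have hRtop : R ≠ ⊤ := by
    rw [hR]
    refine ENNReal.add_ne_top.2 ⟨ENNReal.mul_ne_top ?_ ?_, ENNReal.mul_ne_top ?_ ?_⟩ <;>
      exact (ENNReal.rpow_lt_top_of_nonneg (by norm_num)
        (lt_of_le_of_lt (by assumption) ENNReal.one_lt_top).ne).ne
  -- integral equals toReal of L
  have hint : ∫ ω, Real.sqrt (p ω * q ω) ∂Pi = L.toReal := by
    rw [hL, integral_eq_lintegral_of_nonneg_ae
      (Filter.Eventually.of_forall fun ω => Real.sqrt_nonneg _)
      ((hp.mul hq).sqrt.aestronglyMeasurable (f := fun ω => Real.sqrt (p ω * q ω)))]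
  rw [hint]
  -- set up real variables
  set a := (Q A).toReal with haDef
  set b := (P Aᶜ).toReal with hbDef
  have ha0 : 0 ≤ a := ENNReal.toReal_nonneg
  have hb0 : 0 ≤ b := ENNReal.toReal_nonneg
  have haε : a ≤ ε := ENNReal.toReal_le_of_le_ofReal hε0 herr2
  have hbε : b ≤ ε := ENNReal.toReal_le_of_le_ofReal hε0 herr1
  have hPAr : (P A).toReal = 1 - b := by
    have h : (P A).toReal + (P Aᶜ).toReal = 1 := by
      rw [← ENNReal.toReal_add (lt_of_le_of_lt hPA1 ENNReal.one_lt_top).ne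
        (lt_of_le_of_lt hPAc1 ENNReal.one_lt_top).ne, measure_add_measure_compl hA,
        measure_univ, ENNReal.toReal_one]
    linarith
  have hQAcr : (Q Aᶜ).toReal = 1 - a := by
    have h : (Q A).toReal + (Q Aᶜ).toReal = 1 := by
      rw [← ENNReal.toReal_add (lt_of_le_of_lt hQA1 ENNReal.one_lt_top).ne
        (lt_of_le_of_lt hQAc1 ENNReal.one_lt_top).ne, measure_add_measure_compl hA,
        measure_univ, ENNReal.toReal_one]
    linarith
  -- compute R.toReal
  have hRr : R.toReal = Real.sqrt (1-b) * Real.sqrt a + Real.sqrt b * Real.sqrt (1-a) := by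
    rw [hR, ENNReal.toReal_add (ENNReal.mul_ne_top
        ((ENNReal.rpow_lt_top_of_nonneg (by norm_num) (lt_of_le_of_lt hPA1 ENNReal.one_lt_top).ne).ne)
        ((ENNReal.rpow_lt_top_of_nonneg (by norm_num) (lt_of_le_of_lt hQA1 ENNReal.one_lt_top).ne).ne))
      (ENNReal.mul_ne_top
        ((ENNReal.rpow_lt_top_of_nonneg (by norm_num) (lt_of_le_of_lt hPAc1 ENNReal.one_lt_top).ne).ne)
        ((ENNReal.rpow_lt_top_of_nonneg (by norm_num) (lt_of_le_of_lt hQAc1 ENNReal.one_lt_top).ne).ne)),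
      ENNReal.toReal_mul, ENNReal.toReal_mul, ← ENNReal.toReal_rpow, ← ENNReal.toReal_rpow,
      ← ENNReal.toReal_rpow, ← ENNReal.toReal_rpow, hPAr, hQAcr, ← haDef, ← hbDef]
    rw [Real.sqrt_eq_rpow, Real.sqrt_eq_rpow, Real.sqrt_eq_rpow, Real.sqrt_eq_rpow]
  calc L.toReal ≤ R.toReal := ENNReal.toReal_mono hRtop hLR
    _ = Real.sqrt (1-b) * Real.sqrt a + Real.sqrt b * Real.sqrt (1-a) := hRr
    _ ≤ 2 * Real.sqrt (ε * (1-ε)) := key_ineq ha0 hb0 haε hbε hε0 hε
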